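/- arXiv:1607.04083 — 8 statements merged into one kernel-verified Lean document; each statement's English description precedes it below -/
import Mathlib

section
/- Let ℓ₁, ℓ₂, ℓ₃ be three distinct lines in ℂ³ which are neither all concurrent nor all coplanar, and suppose ℓ₁ and ℓ₂ meet at a point p, spanning a plane h. Then every line ℓ intersecting all three either passes through p, or lies in h and passes through the unique point q = ℓ₃ ∩ h. -/
/-- The affine line in `ℂ³` through the point `p` with direction `d`. -/
def lineThru (p d : ℂ × ℂ × ℂ) : Set (ℂ × ℂ × ℂ) :=
  {x | ∃ t : ℂ, x = p + t • d}

/-- The affine plane `{x : a ⬝ x = c}` in `ℂ³` (with normal vector `a ≠ 0`). -/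
def planeOf (a : ℂ × ℂ × ℂ) (c : ℂ) : Set (ℂ × ℂ × ℂ) :=
  {x | a.1 * x.1 + a.2.1 * x.2.1 + a.2.2 * x.2.2 = c}

lemma lineThru_eq_of_mem {p d y : ℂ × ℂ × ℂ} (hy : y ∈ lineThru p d) :
    lineThru p d = lineThru y d := by
  obtain ⟨s, rfl⟩ := hy
  ext x
  constructor
  · rintro ⟨t, rfl⟩
    exact ⟨t - s, by rw [sub_smul]; abel⟩
  · rintro ⟨t, rfl⟩
    exact ⟨s + t, by rw [add_smul]; abel⟩

lemma lineThru_smul {y d : ℂ × ℂ × ℂ} {k : ℂ} (hk : k ≠ 0) :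
    lineThru y (k • d) = lineThru y d := by
  ext x
  constructor
  · rintro ⟨t, rfl⟩
    exact ⟨t * k, by rw [smul_smul]⟩
  · rintro ⟨t, rfl⟩
    exact ⟨t / k, by rw [smul_smul, div_mul_cancel₀ _ hk]⟩

lemma plane_eval (a x y : ℂ × ℂ × ℂ) (t : ℂ) :
    a.1 * (x + t • y).1 + a.2.1 * (x + t • y).2.1 + a.2.2 * (x + t • y).2.2
      = (a.1 * x.1 + a.2.1 * x.2.1 + a.2.2 * x.2.2)
        + t * (a.1 * y.1 + a.2.1 * y.2.1 + a.2.2 * y.2.2) := by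
  simp [Prod.fst_add, Prod.snd_add, Prod.smul_def]
  ring

/-- Let `ℓ₁, ℓ₂, ℓ₃` be three distinct lines in `ℂ³`, neither all concurrent
nor all coplanar, with `ℓ₁, ℓ₂` meeting at a point `p₀` and spanning a plane
`h` (so `ℓ₃ ⊄ h`, `p₀ ∉ ℓ₃`, and `ℓ₃` meets `h` exactly at a point `q₀`).
Then every line `ℓ` intersecting all three lines either passes through `p₀`,
or lies in `h` and passes through `q₀`. -/
theorem stmt5 (p d : Fin 3 → ℂ × ℂ × ℂ) (hd : ∀ i, d i ≠ 0)
    (hdist : ∀ i j, i ≠ j → lineThru (p i) (d i) ≠ lineThru (p j) (d j))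
    (p₀ : ℂ × ℂ × ℂ)
    (hp₁ : p₀ ∈ lineThru (p 0) (d 0)) (hp₂ : p₀ ∈ lineThru (p 1) (d 1))
    (a : ℂ × ℂ × ℂ) (c : ℂ) (ha : a ≠ 0)
    (h₁ : lineThru (p 0) (d 0) ⊆ planeOf a c)
    (h₂ : lineThru (p 1) (d 1) ⊆ planeOf a c)
    (hp₃ : p₀ ∉ lineThru (p 2) (d 2))
    (q₀ : ℂ × ℂ × ℂ)
    (hq₀ : lineThru (p 2) (d 2) ∩ planeOf a c = {q₀})
    (q e : ℂ × ℂ × ℂ) (he : e ≠ 0)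
    (hmeet : ∀ i, ∃ x, x ∈ lineThru q e ∩ lineThru (p i) (d i)) :
    p₀ ∈ lineThru q e ∨ (lineThru q e ⊆ planeOf a c ∧ q₀ ∈ lineThru q e) := by
  obtain ⟨x1, hx1ℓ, hx1⟩ := hmeet 0
  obtain ⟨x2, hx2ℓ, hx2⟩ := hmeet 1
  obtain ⟨x3, hx3ℓ, hx3⟩ := hmeet 2
  obtain ⟨t1, ht1⟩ := hx1ℓ
  obtain ⟨t2, ht2⟩ := hx2ℓ
  have hfx1 : a.1 * x1.1 + a.2.1 * x1.2.1 + a.2.2 * x1.2.2 = c := h₁ hx1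
  have hfx2 : a.1 * x2.1 + a.2.1 * x2.2.1 + a.2.2 * x2.2.2 = c := h₂ hx2
  set F : ℂ := a.1 * q.1 + a.2.1 * q.2.1 + a.2.2 * q.2.2 with hF
  set G : ℂ := a.1 * e.1 + a.2.1 * e.2.1 + a.2.2 * e.2.2 with hG
  have e1 : F + t1 * G = c := by rw [← plane_eval, ← ht1]; exact hfx1
  have e2 : F + t2 * G = c := by rw [← plane_eval, ← ht2]; exact hfx2
  by_cases hteq : t1 = t2
  · -- x1 = x2, a single point on both ℓ₁ and ℓ₂; it must be p₀
    left
    have hx12 : x1 = x2 := by rw [ht1, ht2, hteq]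
    by_cases hwp : x1 = p₀
    · exact hwp ▸ ⟨t1, ht1⟩
    · exfalso
      have l1 : lineThru (p 0) (d 0) = lineThru p₀ (d 0) := lineThru_eq_of_mem hp₁
      have l2 : lineThru (p 1) (d 1) = lineThru p₀ (d 1) := lineThru_eq_of_mem hp₂
      have hw1 : x1 ∈ lineThru p₀ (d 0) := l1 ▸ hx1
      have hw2 : x1 ∈ lineThru p₀ (d 1) := by rw [← l2, hx12]; exact hx2
      obtain ⟨u1, hu1⟩ := hw1
      obtain ⟨u2, hu2⟩ := hw2
      have hu1ne : u1 ≠ 0 := by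
        rintro rfl; apply hwp; simpa using hu1
      have hu2ne : u2 ≠ 0 := by
        rintro rfl; apply hwp; simpa using hu2
      have hdd : u1 • d 0 = u2 • d 1 := by
        have := hu1.symm.trans hu2
        exact add_left_cancel this
      have hd1 : d 1 = (u2⁻¹ * u1) • d 0 := by
        rw [mul_smul, hdd, inv_smul_smul₀ hu2ne]
      apply hdist 0 1 (by decide)
      rw [l1, l2, hd1, lineThru_smul (mul_ne_zero (inv_ne_zero hu2ne) hu1ne)]
  · -- the line lies in the plane
    right
    have hG0 : G = 0 := by
      have : (t1 - t2) * G = 0 := by linear_combination e1 - e2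
      rcases mul_eq_zero.mp this with h | h
      · exact absurd (sub_eq_zero.mp h) hteq
      · exact h
    have hFc : F = c := by rw [hG0, mul_zero, add_zero] at e1; exact e1
    have hsub : lineThru q e ⊆ planeOf a c := by
      rintro x ⟨t, rfl⟩
      show _ = c
      rw [plane_eval, ← hF, ← hG, hG0, mul_zero, add_zero, hFc]
    refine ⟨hsub, ?_⟩
    have : x3 ∈ lineThru (p 2) (d 2) ∩ planeOf a c := ⟨hx3, hsub hx3ℓ⟩
    rw [hq₀] at this
    rw [← this]
    exact hx3ℓ
end

section
/- If G is a Laman graph on n ≥ 3 vertices, and G is obtained from a graph G' by a 0-extension (adding a new vertex adjacent to exactly two existing vertices), then G' is a Laman graph. -/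
/-- A graph `G` on a finite vertex set `V` is a Laman graph if `|E| = 2|V| − 3`
and every subgraph induced on a set `V'` of at least two vertices spans at most
`2|V'| − 3` edges. -/
def IsLaman {V : Type*} [Fintype V] (G : SimpleGraph V) : Prop :=
  G.edgeSet.ncard = 2 * Fintype.card V - 3 ∧
  ∀ V' : Set V, 2 ≤ V'.ncard →
    {e ∈ G.edgeSet | ∀ v ∈ e, v ∈ V'}.ncard ≤ 2 * V'.ncard - 3

lemma mem_image_map_some {V : Type*} (S : Set (Sym2 V)) (a b : Option V) :
    s(a, b) ∈ Sym2.map some '' S ↔ ∃ x y, a = some x ∧ b = some y ∧ s(x, y) ∈ S := by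
  constructor
  · rintro ⟨e, he, heq⟩
    induction e using Sym2.ind with
    | _ x y =>
      rw [Sym2.map_pair_eq, Sym2.eq_iff] at heq
      rcases heq with ⟨h1, h2⟩ | ⟨h1, h2⟩
      · exact ⟨x, y, h1.symm, h2.symm, he⟩
      · exact ⟨y, x, h2.symm, h1.symm, (Sym2.eq_swap ▸ he : s(y, x) ∈ S)⟩
  · rintro ⟨x, y, rfl, rfl, h⟩
    exact ⟨s(x, y), h, Sym2.map_pair_eq _ _ _⟩

/-- If `G` (on `n ≥ 3` vertices) is a Laman graph obtained from `G'` by a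
`0`-extension (adding a new vertex, here `none : Option V`, adjacent to exactly
the two distinct existing vertices `u₁, u₂`), then `G'` is a Laman graph. -/
theorem stmt9 {V : Type*} [Fintype V] (G : SimpleGraph (Option V))
    (G' : SimpleGraph V) (u₁ u₂ : V) (hu : u₁ ≠ u₂)
    (hnew : ∀ x : V, G.Adj none (some x) ↔ (x = u₁ ∨ x = u₂))
    (hold : ∀ x y : V, G.Adj (some x) (some y) ↔ G'.Adj x y)
    (hn : 3 ≤ Fintype.card (Option V))
    (hG : IsLaman G) : IsLaman G' := by
  classical
  have hinj : Function.Injective (Sym2.map (some : V → Option V)) :=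
    Sym2.map.injective (Option.some_injective V)
  -- edge set decomposition
  have hA : G.edgeSet = Sym2.map some '' G'.edgeSet ∪
      {s(none, some u₁), s(none, some u₂)} := by
    ext e
    induction e using Sym2.ind with
    | _ a b =>
      simp only [SimpleGraph.mem_edgeSet, Set.mem_union, mem_image_map_some,
        Set.mem_insert_iff, Set.mem_singleton_iff]
      cases a with
      | none =>
        cases b with
        | none => simp [Sym2.eq_iff]
        | some x =>
          simp only [hnew x, Sym2.eq_iff]
          constructor
          · rintro (rfl | rfl) <;> simp
          · rintro (⟨x', y', h, _⟩ | h | h)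
            · exact absurd h (by simp)
            · rcases h with ⟨_, h⟩ | ⟨h, _⟩ <;> simp_all
            · rcases h with ⟨_, h⟩ | ⟨h, _⟩ <;> simp_all
      | some x =>
        cases b with
        | none =>
          rw [SimpleGraph.adj_comm] at *
          simp only [hnew x, Sym2.eq_iff]
          constructor
          · rintro (rfl | rfl) <;> simp
          · rintro (⟨x', y', _, h, _⟩ | h | h)
            · exact absurd h (by simp)
            · rcases h with ⟨h, _⟩ | ⟨_, h⟩ <;> simp_all
            · rcases h with ⟨h, _⟩ | ⟨_, h⟩ <;> simp_all
        | some y =>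
          simp only [hold x y, Sym2.eq_iff]
          constructor
          · intro h
            exact Or.inl ⟨x, y, rfl, rfl, h⟩
          · rintro (⟨x', y', hx, hy, h⟩ | h | h)
            · obtain rfl : x' = x := Option.some_injective _ hx.symm
              obtain rfl : y' = y := Option.some_injective _ hy.symm
              exact h
            · rcases h with ⟨h, _⟩ | ⟨_, h⟩ <;> simp_all
            · rcases h with ⟨h, _⟩ | ⟨_, h⟩ <;> simp_all
  have hcardV : 2 ≤ Fintype.card V := by
    have : Fintype.card (Option V) = Fintype.card V + 1 := Fintype.card_option
    omega
  have hcount : G.edgeSet.ncard = G'.edgeSet.ncard + 2 := by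
    rw [hA, Set.ncard_union_eq, Set.ncard_image_of_injective _ hinj, Set.ncard_pair]
    · simp [Sym2.eq_iff, hu]
    · rw [Set.disjoint_left]
      rintro e he (rfl | rfl) <;>
      · rcases he with ⟨e', _, heq⟩
        induction e' using Sym2.ind with
        | _ x y => rw [Sym2.map_pair_eq, Sym2.eq_iff] at heq; simp_all
  constructor
  · have h1 := hG.1
    rw [hcount, Fintype.card_option] at h1
    omega
  · intro V' hV'
    have hkey : {e ∈ G.edgeSet | ∀ v ∈ e, v ∈ some '' V'} =
        Sym2.map some '' {e ∈ G'.edgeSet | ∀ v ∈ e, v ∈ V'} := by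
      ext e
      induction e using Sym2.ind with
      | _ a b =>
        simp only [Set.mem_setOf_eq, mem_image_map_some]
        constructor
        · rintro ⟨he, hv⟩
          have ha := hv a (by simp)
          have hb := hv b (by simp)
          obtain ⟨x, hx, rfl⟩ := ha
          obtain ⟨y, hy, rfl⟩ := hb
          refine ⟨x, y, rfl, rfl, (hold x y).mp he, ?_⟩
          intro v hv'
          rcases Sym2.mem_iff.mp hv' with rfl | rfl <;> assumption
        · rintro ⟨x, y, rfl, rfl, he, hv⟩
          refine ⟨(hold x y).mpr he, ?_⟩
          intro v hv'
          rcases Sym2.mem_iff.mp hv' with rfl | rfl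
          · exact ⟨x, hv x (by simp), rfl⟩
          · exact ⟨y, hv y (by simp), rfl⟩
    have himg : (some '' V' : Set (Option V)).ncard = V'.ncard :=
      Set.ncard_image_of_injective _ (Option.some_injective V)
    have := hG.2 (some '' V') (by rw [himg]; exact hV')
    rw [hkey, himg] at this
    rwa [Set.ncard_image_of_injective _ hinj] at this
end

section
/- If G' is a Laman graph and G is obtained from G' by a 1-extension (subdividing an edge uv by a new vertex z and adding an edge zw for some vertex w ∉ {u,v}), then G is a Laman graph. -/
open Set

lemma aux_none_notmem_map {V : Type*} (f : Sym2 V) :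
    (none : Option V) ∉ Sym2.map some f := by
  induction f using Sym2.ind with
  | _ x y => simp [Sym2.map_pair_eq]

lemma aux_decomp_no {V : Type*} (G' : SimpleGraph V)
    (G : SimpleGraph (Option V)) (u v : V)
    (hold : ∀ x y : V, G.Adj (some x) (some y) ↔
      (G'.Adj x y ∧ ¬(x = u ∧ y = v) ∧ ¬(x = v ∧ y = u))) (T : Set V) :
    {e ∈ G.edgeSet | ∀ x ∈ e, x ∈ some '' T}
      = Sym2.map some '' ({f ∈ G'.edgeSet | ∀ x ∈ f, x ∈ T} \ {s(u, v)}) := by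
  ext e
  induction e using Sym2.ind with
  | _ a b =>
    constructor
    · rintro ⟨hadj, hmem⟩
      obtain ⟨x, hxT, rfl⟩ := hmem a (Sym2.mem_mk_left a b)
      obtain ⟨y, hyT, rfl⟩ := hmem b (Sym2.mem_mk_right _ _)
      rw [SimpleGraph.mem_edgeSet, hold] at hadj
      refine ⟨s(x, y), ⟨⟨hadj.1, ?_⟩, ?_⟩, by simp [Sym2.map_pair_eq]⟩
      · intro c hc
        rcases Sym2.mem_iff.mp hc with rfl | rfl <;> assumption
      · simp only [mem_singleton_iff, Sym2.eq_iff]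
        tauto
    · rintro ⟨f, ⟨⟨hf, hfm⟩, hfne⟩, hfe⟩
      rw [← hfe]
      induction f using Sym2.ind with
      | _ x y =>
        simp only [mem_singleton_iff, Sym2.eq_iff, not_or] at hfne
        rw [Sym2.map_pair_eq]
        refine ⟨?_, ?_⟩
        · rw [SimpleGraph.mem_edgeSet, hold]
          exact ⟨hf, fun h => hfne.1 ⟨h.1, h.2⟩, fun h => hfne.2 ⟨h.1, h.2⟩⟩
        · intro c hc
          rcases Sym2.mem_iff.mp hc with rfl | rfl
          · exact ⟨x, hfm x (Sym2.mem_mk_left _ _), rfl⟩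
          · exact ⟨y, hfm y (Sym2.mem_mk_right _ _), rfl⟩

lemma aux_decomp_yes {V : Type*} (G' : SimpleGraph V)
    (G : SimpleGraph (Option V)) (u v w : V)
    (hnew : ∀ x : V, G.Adj none (some x) ↔ (x = u ∨ x = v ∨ x = w))
    (hold : ∀ x y : V, G.Adj (some x) (some y) ↔
      (G'.Adj x y ∧ ¬(x = u ∧ y = v) ∧ ¬(x = v ∧ y = u))) (T : Set V) :
    {e ∈ G.edgeSet | ∀ x ∈ e, x ∈ insert none (some '' T)}
      = Sym2.map some '' ({f ∈ G'.edgeSet | ∀ x ∈ f, x ∈ T} \ {s(u, v)})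
        ∪ (fun x : V => s((none : Option V), some x)) '' ({u, v, w} ∩ T) := by
  have hins : ∀ (x : V), (some x ∈ insert none (some '' T)) ↔ x ∈ T := by
    intro x
    simp [(Option.some_injective V).mem_set_image]
  have key : ∀ y : V, (s((none : Option V), some y) ∈
        {e ∈ G.edgeSet | ∀ x ∈ e, x ∈ insert none (some '' T)}
      ↔ s((none : Option V), some y) ∈
        Sym2.map some '' ({f ∈ G'.edgeSet | ∀ x ∈ f, x ∈ T} \ {s(u, v)})
          ∪ (fun x : V => s((none : Option V), some x)) '' ({u, v, w} ∩ T)) := by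
    intro y
    constructor
    · rintro ⟨hadj, hmem⟩
      rw [SimpleGraph.mem_edgeSet, hnew] at hadj
      right
      refine ⟨y, ⟨by simpa using hadj, ?_⟩, rfl⟩
      exact (hins y).mp (hmem (some y) (Sym2.mem_mk_right _ _))
    · rintro (⟨f, -, hf⟩ | ⟨x, ⟨hx1, hx2⟩, hx⟩)
      · exact absurd (hf ▸ Sym2.mem_mk_left _ _) (aux_none_notmem_map f)
      · simp only [Sym2.eq_iff] at hx
        rcases hx with ⟨-, hx⟩ | ⟨h1, -⟩
        · obtain rfl : x = y := Option.some_injective V hx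
          constructor
          · rw [SimpleGraph.mem_edgeSet, hnew]
            simpa using hx1
          · intro c hc
            rcases Sym2.mem_iff.mp hc with rfl | rfl
            · exact mem_insert _ _
            · exact (hins x).mpr hx2
        · simp at h1
  ext e
  induction e using Sym2.ind with
  | _ a b =>
    match a, b with
    | none, none =>
      constructor
      · rintro ⟨hadj, -⟩
        simp only [SimpleGraph.mem_edgeSet] at hadj
        exact absurd hadj (G.irrefl)
      · rintro (⟨f, -, hf⟩ | ⟨x, -, hx⟩)
        · exact absurd (hf ▸ Sym2.mem_mk_left none none) (aux_none_notmem_map f)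
        · simp only [Sym2.eq_iff] at hx
          simp at hx
    | none, some y => exact key y
    | some x, none =>
      rw [show (s((some x : Option V), none) = s(none, some x)) from Sym2.eq_swap]
      exact key x
    | some x, some y =>
      constructor
      · rintro ⟨hadj, hmem⟩
        rw [SimpleGraph.mem_edgeSet, hold] at hadj
        left
        refine ⟨s(x, y), ⟨⟨hadj.1, ?_⟩, ?_⟩, by simp [Sym2.map_pair_eq]⟩
        · intro c hc
          rcases Sym2.mem_iff.mp hc with rfl | rfl
          · exact (hins c).mp (hmem _ (Sym2.mem_mk_left _ _))
          · exact (hins c).mp (hmem _ (Sym2.mem_mk_right _ _))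
        · simp only [mem_singleton_iff, Sym2.eq_iff]
          tauto
      · rintro (⟨f, ⟨⟨hf, hfm⟩, hfne⟩, hfe⟩ | ⟨c, -, hc⟩)
        · rw [← hfe]
          induction f using Sym2.ind with
          | _ p q =>
            rw [Sym2.map_pair_eq]
            simp only [mem_singleton_iff, Sym2.eq_iff, not_or] at hfne
            refine ⟨?_, ?_⟩
            · rw [SimpleGraph.mem_edgeSet, hold]
              exact ⟨hf, fun h => hfne.1 ⟨h.1, h.2⟩, fun h => hfne.2 ⟨h.1, h.2⟩⟩
            · intro c hc
              rcases Sym2.mem_iff.mp hc with rfl | rfl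
              · exact (hins p).mpr (hfm p (Sym2.mem_mk_left _ _))
              · exact (hins q).mpr (hfm q (Sym2.mem_mk_right _ _))
        · simp only [Sym2.eq_iff] at hc
          simp at hc



/-- If `G'` is a Laman graph and `G` is obtained from `G'` by a `1`-extension
(subdividing the edge `uv` by a new vertex `z`, here `none : Option V`, and
adding the edge `zw` for some vertex `w ∉ {u,v}`), then `G` is a Laman graph. -/
theorem stmt10 {V : Type*} [Fintype V] (G' : SimpleGraph V)
    (G : SimpleGraph (Option V)) (u v w : V)
    (huv : G'.Adj u v) (hwu : w ≠ u) (hwv : w ≠ v)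
    (hnew : ∀ x : V, G.Adj none (some x) ↔ (x = u ∨ x = v ∨ x = w))
    (hold : ∀ x y : V, G.Adj (some x) (some y) ↔
      (G'.Adj x y ∧ ¬(x = u ∧ y = v) ∧ ¬(x = v ∧ y = u)))
    (hG' : IsLaman G') : IsLaman G := by
  classical
  obtain ⟨hc, hsub⟩ := hG'
  have hn2 : 2 ≤ Fintype.card V := Fintype.one_lt_card_iff_nontrivial.mpr ⟨⟨u, v, huv.ne⟩⟩
  have hzinj : Function.Injective (fun x : V => s((none : Option V), some x)) := by
    intro x y h
    simp only [Sym2.eq_iff] at h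
    rcases h with ⟨-, h⟩ | ⟨-, h⟩
    · exact Option.some_injective V h
    · simp at h
  have heminj : Function.Injective (Sym2.map (some : V → Option V)) :=
    Sym2.map.injective (Option.some_injective V)
  have hdisj : ∀ (A : Set (Sym2 V)) (B : Set V),
      Disjoint (Sym2.map some '' A) ((fun x : V => s((none : Option V), some x)) '' B) := by
    intro A B
    rw [Set.disjoint_left]
    rintro e ⟨f, -, rfl⟩ ⟨x, -, hx⟩
    exact aux_none_notmem_map f (hx ▸ Sym2.mem_mk_left _ _)
  have hcount : ∀ T : Set V,
      {e ∈ G.edgeSet | ∀ x ∈ e, x ∈ insert none (some '' T)}.ncard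
        = ({f ∈ G'.edgeSet | ∀ x ∈ f, x ∈ T} \ {s(u, v)}).ncard + ({u, v, w} ∩ T).ncard := by
    intro T
    rw [aux_decomp_yes G' G u v w hnew hold T,
      Set.ncard_union_eq (hdisj _ _) (Set.toFinite _) (Set.toFinite _),
      Set.ncard_image_of_injective _ heminj, Set.ncard_image_of_injective _ hzinj]
  have hinscard : ∀ T : Set V, (insert (none : Option V) (some '' T)).ncard = T.ncard + 1 := by
    intro T
    rw [Set.ncard_insert_of_notMem (by simp) (Set.toFinite _),
      Set.ncard_image_of_injective _ (Option.some_injective V)]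
  have h3card : ({u, v, w} : Set V).ncard = 3 := by
    rw [Set.ncard_insert_of_notMem (by simp [huv.ne, Ne.symm hwu]) (Set.toFinite _),
      Set.ncard_insert_of_notMem (by simp [Ne.symm hwv]) (Set.toFinite _),
      Set.ncard_singleton]
  constructor
  · have huniv : (univ : Set (Option V)) = insert none (some '' univ) := by
      ext o; cases o <;> simp
    have h1 : G.edgeSet = {e ∈ G.edgeSet | ∀ x ∈ e, x ∈ insert none (some '' (univ : Set V))} := by
      rw [← huniv]; ext e; simp
    have h2 : {f ∈ G'.edgeSet | ∀ x ∈ f, x ∈ (univ : Set V)} = G'.edgeSet := by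
      ext f; simp
    rw [h1, hcount univ, h2,
      Set.ncard_diff_singleton_of_mem ((SimpleGraph.mem_edgeSet G').mpr huv)]
    have h4 : ({u, v, w} ∩ (univ : Set V)).ncard = 3 := by rw [Set.inter_univ, h3card]
    rw [h4, hc, Fintype.card_option]
    omega
  · intro S hS2
    set T := some ⁻¹' S with hT
    by_cases hn : (none : Option V) ∈ S
    · have hSeq : S = insert none (some '' T) := by
        ext o
        cases o with
        | none => simp [hn]
        | some x =>
          simp only [Set.mem_insert_iff, (Option.some_injective V).mem_set_image,
            reduceCtorEq, false_or]
          exact Iff.rfl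
      rw [hSeq, hcount T, hinscard T]
      rw [hSeq, hinscard T] at hS2
      by_cases hb : u ∈ T ∧ v ∈ T
      · have huvmem : s(u, v) ∈ {f ∈ G'.edgeSet | ∀ x ∈ f, x ∈ T} := by
          refine ⟨(SimpleGraph.mem_edgeSet G').mpr huv, ?_⟩
          intro c hc'
          rcases Sym2.mem_iff.mp hc' with rfl | rfl
          · exact hb.1
          · exact hb.2
        have hd := Set.ncard_diff_singleton_of_mem huvmem
        have hT2 : 2 ≤ T.ncard :=
          (Set.one_lt_ncard_iff (Set.toFinite _)).mpr ⟨u, v, hb.1, hb.2, huv.ne⟩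
        have hF := hsub T hT2
        have h3 : ({u, v, w} ∩ T).ncard ≤ 3 :=
          h3card ▸ Set.ncard_le_ncard Set.inter_subset_left (Set.toFinite _)
        omega
      · have h2 : ({u, v, w} ∩ T).ncard ≤ 2 := by
          rw [not_and_or] at hb
          rcases hb with hb | hb
          · have hsub2 : {u, v, w} ∩ T ⊆ {v, w} := by
              rintro x ⟨hx1, hx2⟩
              rcases hx1 with rfl | hx1
              · exact absurd hx2 hb
              · exact hx1
            calc ({u, v, w} ∩ T).ncard ≤ ({v, w} : Set V).ncard :=
                  Set.ncard_le_ncard hsub2 (Set.toFinite _)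
              _ = 2 := Set.ncard_pair (Ne.symm hwv)
          · have hsub2 : {u, v, w} ∩ T ⊆ {u, w} := by
              rintro x ⟨hx1, hx2⟩
              rcases hx1 with rfl | rfl | rfl
              · exact Set.mem_insert _ _
              · exact absurd hx2 hb
              · exact Set.mem_insert_of_mem _ rfl
            calc ({u, v, w} ∩ T).ncard ≤ ({u, w} : Set V).ncard :=
                  Set.ncard_le_ncard hsub2 (Set.toFinite _)
              _ = 2 := Set.ncard_pair (Ne.symm hwu)
        by_cases hT2 : 2 ≤ T.ncard
        · have hF := hsub T hT2
          have hdle : ({f ∈ G'.edgeSet | ∀ x ∈ f, x ∈ T} \ {s(u, v)}).ncard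
              ≤ {f ∈ G'.edgeSet | ∀ x ∈ f, x ∈ T}.ncard :=
            Set.ncard_le_ncard Set.diff_subset (Set.toFinite _)
          omega
        · have hFe : {f ∈ G'.edgeSet | ∀ x ∈ f, x ∈ T} = ∅ := by
            ext f
            induction f using Sym2.ind with
            | _ x y =>
              simp only [Set.mem_setOf_eq, Set.mem_empty_iff_false, iff_false, not_and]
              intro hadj hm
              have hx := hm x (Sym2.mem_mk_left _ _)
              have hy := hm y (Sym2.mem_mk_right _ _)
              have : 1 < T.ncard := (Set.one_lt_ncard_iff (Set.toFinite _)).mpr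
                ⟨x, y, hx, hy, ((SimpleGraph.mem_edgeSet G').mp hadj).ne⟩
              omega
          have hIT : ({u, v, w} ∩ T).ncard ≤ T.ncard :=
            Set.ncard_le_ncard Set.inter_subset_right (Set.toFinite _)
          rw [hFe, Set.empty_diff, Set.ncard_empty]
          omega
    · have hSeq : S = some '' T := by
        ext o
        cases o with
        | none => simp [hn]
        | some x =>
          simp only [(Option.some_injective V).mem_set_image]
          exact Iff.rfl
      have hScard : (some '' T).ncard = T.ncard :=
        Set.ncard_image_of_injective _ (Option.some_injective V)
      rw [hSeq] at hS2 ⊢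
      rw [aux_decomp_no G' G u v hold T, Set.ncard_image_of_injective _ heminj, hScard]
      rw [hScard] at hS2
      have hF := hsub T hS2
      have hdle : ({f ∈ G'.edgeSet | ∀ x ∈ f, x ∈ T} \ {s(u, v)}).ncard
          ≤ {f ∈ G'.edgeSet | ∀ x ∈ f, x ∈ T}.ncard :=
        Set.ncard_le_ncard Set.diff_subset (Set.toFinite _)
      omega
end

section
/- If G' is a Laman graph and G is obtained from G' by a 0-extension, then G is a Laman graph. -/
/-- If `G'` is a Laman graph and `G` is obtained from `G'` by a `0`-extension
(adding a new vertex, here `none : Option V`, joined to exactly the two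
distinct existing vertices `u₁, u₂`), then `G` is a Laman graph. -/
theorem stmt11 {V : Type*} [Fintype V] (G' : SimpleGraph V)
    (G : SimpleGraph (Option V)) (u₁ u₂ : V) (hu : u₁ ≠ u₂)
    (hnew : ∀ x : V, G.Adj none (some x) ↔ (x = u₁ ∨ x = u₂))
    (hold : ∀ x y : V, G.Adj (some x) (some y) ↔ G'.Adj x y)
    (hG' : IsLaman G') : IsLaman G := by
  classical
  have hcard2 : 2 ≤ Fintype.card V :=
    Fintype.one_lt_card_iff_nontrivial.2 ⟨u₁, u₂, hu⟩
  have hinj : Function.Injective (Sym2.map (some : V → Option V)) :=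
    Sym2.map.injective (Option.some_injective V)
  -- structure of edges of G
  have hsub : ∀ e ∈ G.edgeSet, (∃ f ∈ G'.edgeSet, e = Sym2.map some f) ∨
      e = s(none, some u₁) ∨ e = s(none, some u₂) := by
    intro e he
    induction e using Sym2.ind with
    | _ a b =>
      match a, b with
      | none, none => exact absurd he (G.irrefl)
      | none, some x =>
        rcases (hnew x).1 he with rfl | rfl
        · exact Or.inr (Or.inl rfl)
        · exact Or.inr (Or.inr rfl)
      | some x, none =>
        rcases (hnew x).1 (G.adj_symm he) with rfl | rfl
        · exact Or.inr (Or.inl (Sym2.eq_swap))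
        · exact Or.inr (Or.inr (Sym2.eq_swap))
      | some x, some y =>
        exact Or.inl ⟨s(x, y), (hold x y).1 he, rfl⟩
  have himg : ∀ f ∈ G'.edgeSet, Sym2.map some f ∈ G.edgeSet := by
    intro f hf
    induction f using Sym2.ind with
    | _ x y => exact (hold x y).2 hf
  have hne : s(Option.none, some u₁) ≠ s(Option.none, some u₂) := by
    simp [Sym2.mk_eq_mk_iff, Prod.ext_iff, hu]
  have hnonemem : ∀ f : Sym2 V, (none : Option V) ∉ Sym2.map some f := by
    intro f hmem
    rcases Sym2.mem_map.1 hmem with ⟨v, _, hv⟩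
    exact Option.some_ne_none v hv
  constructor
  · -- edge count
    have hset : G.edgeSet =
        (Sym2.map some '' G'.edgeSet) ∪ {s(none, some u₁), s(none, some u₂)} := by
      ext e
      constructor
      · intro he
        rcases hsub e he with ⟨f, hf, rfl⟩ | h | h
        · exact Or.inl ⟨f, hf, rfl⟩
        · exact Or.inr (Or.inl h)
        · exact Or.inr (Or.inr h)
      · rintro (⟨f, hf, rfl⟩ | h | h)
        · exact himg f hf
        · subst h; exact (hnew u₁).2 (Or.inl rfl)
        · subst h; exact (hnew u₂).2 (Or.inr rfl)
    have hdisj : Disjoint (Sym2.map some '' G'.edgeSet)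
        ({s(none, some u₁), s(none, some u₂)} : Set (Sym2 (Option V))) := by
      rw [Set.disjoint_left]
      rintro e ⟨f, _, rfl⟩ (h | h)
      · exact hnonemem f (h ▸ Sym2.mem_mk_left _ _)
      · exact hnonemem f (h ▸ Sym2.mem_mk_left _ _)
    rw [hset, Set.ncard_union_eq hdisj (Set.toFinite _) (Set.toFinite _),
      Set.ncard_image_of_injective _ hinj, Set.ncard_pair hne, hG'.1,
      Fintype.card_option]
    omega
  · -- subgraph count
    intro V' hV'
    set S : Set V := some ⁻¹' V' with hS
    set A : Set (Sym2 V) := {e ∈ G'.edgeSet | ∀ v ∈ e, v ∈ S} with hA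
    have hAcount : 2 ≤ S.ncard → A.ncard ≤ 2 * S.ncard - 3 := hG'.2 S
    have hAsub : ∀ e ∈ ({e ∈ G.edgeSet | ∀ v ∈ e, v ∈ V'} : Set _),
        (∃ f ∈ A, e = Sym2.map some f) ∨
        (e = s(none, some u₁) ∧ (none : Option V) ∈ V' ∧ u₁ ∈ S) ∨
        (e = s(none, some u₂) ∧ (none : Option V) ∈ V' ∧ u₂ ∈ S) := by
      rintro e ⟨he, hv⟩
      rcases hsub e he with ⟨f, hf, rfl⟩ | rfl | rfl
      · refine Or.inl ⟨f, ⟨hf, ?_⟩, rfl⟩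
        intro v hvf
        exact hv (some v) (Sym2.mem_map.2 ⟨v, hvf, rfl⟩)
      · exact Or.inr (Or.inl ⟨rfl, hv none (Sym2.mem_mk_left _ _),
          hv (some u₁) (Sym2.mem_mk_right _ _)⟩)
      · exact Or.inr (Or.inr ⟨rfl, hv none (Sym2.mem_mk_left _ _),
          hv (some u₂) (Sym2.mem_mk_right _ _)⟩)
    by_cases hnoneV : (none : Option V) ∈ V'
    · -- new vertex is in V'
      have hV'eq : V' = insert none (some '' S) := by
        ext x
        cases x with
        | none => simp [hnoneV]
        | some x => simp [hS]
      have hcardV' : V'.ncard = S.ncard + 1 := by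
        rw [hV'eq, Set.ncard_insert_of_notMem (by simp) (Set.toFinite _),
          Set.ncard_image_of_injective _ (Option.some_injective V)]
      by_cases hS2 : 2 ≤ S.ncard
      · have hsubset : {e ∈ G.edgeSet | ∀ v ∈ e, v ∈ V'} ⊆
            (Sym2.map some '' A) ∪ {s(none, some u₁), s(none, some u₂)} := by
          intro e he
          rcases hAsub e he with ⟨f, hf, rfl⟩ | ⟨h, _⟩ | ⟨h, _⟩
          · exact Or.inl ⟨f, hf, rfl⟩
          · exact Or.inr (Or.inl h)
          · exact Or.inr (Or.inr h)
        calc {e ∈ G.edgeSet | ∀ v ∈ e, v ∈ V'}.ncard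
            ≤ ((Sym2.map some '' A) ∪ {s(none, some u₁), s(none, some u₂)}).ncard :=
              Set.ncard_le_ncard hsubset (Set.toFinite _)
          _ ≤ (Sym2.map some '' A).ncard +
              ({s(none, some u₁), s(none, some u₂)} : Set (Sym2 (Option V))).ncard :=
              Set.ncard_union_le _ _
          _ ≤ (2 * S.ncard - 3) + 2 := by
              rw [Set.ncard_image_of_injective _ hinj, Set.ncard_pair hne]
              exact Nat.add_le_add_right (hAcount hS2) 2
          _ ≤ 2 * V'.ncard - 3 := by rw [hcardV']; omega
      · -- S is a singleton
        have hS1 : S.ncard = 1 := by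
          rw [hcardV'] at hV'; omega
        obtain ⟨x, hx⟩ := Set.ncard_eq_one.1 hS1
        have hle1 : {e ∈ G.edgeSet | ∀ v ∈ e, v ∈ V'}.ncard ≤ 1 := by
          rw [Set.ncard_le_one_iff_eq (Set.toFinite _)]
          rcases Set.eq_empty_or_nonempty {e ∈ G.edgeSet | ∀ v ∈ e, v ∈ V'} with h | h
          · exact Or.inl h
          · refine Or.inr ⟨s(none, some x), ?_⟩
            apply Set.eq_singleton_iff_nonempty_unique_mem.2 ⟨h, ?_⟩
            intro e he
            rcases hAsub e he with ⟨f, ⟨hf, hfS⟩, rfl⟩ | ⟨rfl, _, hu1⟩ | ⟨rfl, _, hu2⟩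
            · exfalso
              induction f using Sym2.ind with
              | _ a b =>
                have ha : a ∈ S := hfS a (Sym2.mem_mk_left _ _)
                have hb : b ∈ S := hfS b (Sym2.mem_mk_right _ _)
                rw [hx] at ha hb
                simp only [Set.mem_singleton_iff] at ha hb
                subst ha; subst hb
                exact G'.irrefl hf
            · rw [hx] at hu1
              simp only [Set.mem_singleton_iff] at hu1
              rw [hu1]
            · rw [hx] at hu2
              simp only [Set.mem_singleton_iff] at hu2
              rw [hu2]
        calc {e ∈ G.edgeSet | ∀ v ∈ e, v ∈ V'}.ncard ≤ 1 := hle1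
          _ ≤ 2 * V'.ncard - 3 := by rw [hcardV', hS1]
    · -- new vertex not in V'
      have hV'eq : V' = some '' S := by
        ext x
        cases x with
        | none => simp [hnoneV]
        | some x => simp [hS]
      have hcardV' : V'.ncard = S.ncard := by
        rw [hV'eq, Set.ncard_image_of_injective _ (Option.some_injective V)]
      have hsubset : {e ∈ G.edgeSet | ∀ v ∈ e, v ∈ V'} ⊆ Sym2.map some '' A := by
        intro e he
        rcases hAsub e he with ⟨f, hf, rfl⟩ | ⟨_, hn, _⟩ | ⟨_, hn, _⟩
        · exact ⟨f, hf, rfl⟩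
        · exact absurd hn hnoneV
        · exact absurd hn hnoneV
      calc {e ∈ G.edgeSet | ∀ v ∈ e, v ∈ V'}.ncard
          ≤ (Sym2.map some '' A).ncard := Set.ncard_le_ncard hsubset (Set.toFinite _)
        _ = A.ncard := Set.ncard_image_of_injective _ hinj
        _ ≤ 2 * S.ncard - 3 := hAcount (hcardV' ▸ hV')
        _ = 2 * V'.ncard - 3 := by rw [hcardV']
end

section
/- For distinct points a, b, c, d in ℝ², the lines ℓ_{a,b} = {(½(a+b) + t·½(a−b)^⊥, t) : t ∈ ℝ} and ℓ_{c,d} in ℝ³ intersect or are parallel if and only if ‖a − c‖ = ‖b − d‖. -/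
/-- Counterclockwise rotation of `ℝ²` by `π/2`: `(x,y)^⊥ = (−y,x)`. -/
def perp (p : ℝ × ℝ) : ℝ × ℝ := (-p.2, p.1)

/-- The midpoint `u_{a,b} = ½(a+b)`. -/
noncomputable def uab (a b : ℝ × ℝ) : ℝ × ℝ := (1 / 2 : ℝ) • (a + b)

/-- The direction `v_{a,b} = ½(a−b)^⊥`. -/
noncomputable def vab (a b : ℝ × ℝ) : ℝ × ℝ := (1 / 2 : ℝ) • perp (a - b)

/-- The Elekes–Sharir line `ℓ_{a,b} = {(u_{a,b} + t v_{a,b}, t) : t ∈ ℝ} ⊂ ℝ³`. -/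
def lineES (a b : ℝ × ℝ) : Set ((ℝ × ℝ) × ℝ) :=
  {q | ∃ t : ℝ, q = (uab a b + t • vab a b, t)}

/-- The Euclidean distance between two points of `ℝ²`. -/
noncomputable def edist2 (p q : ℝ × ℝ) : ℝ :=
  Real.sqrt ((p.1 - q.1) ^ 2 + (p.2 - q.2) ^ 2)

/-- For pairwise distinct points `a, b, c, d ∈ ℝ²`, the lines `ℓ_{a,b}` and
`ℓ_{c,d}` in `ℝ³` intersect or are parallel (equal direction vectors
`v_{a,b} = v_{c,d}`, i.e. proportional directions `(v,1)`) iff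
`‖a − c‖ = ‖b − d‖`. -/
theorem stmt14 (a b c d : ℝ × ℝ)
    (hab : a ≠ b) (hac : a ≠ c) (had : a ≠ d)
    (hbc : b ≠ c) (hbd : b ≠ d) (hcd : c ≠ d) :
    ((∃ q, q ∈ lineES a b ∩ lineES c d) ∨ vab a b = vab c d) ↔
      edist2 a c = edist2 b d := by
  obtain ⟨a1, a2⟩ := a; obtain ⟨b1, b2⟩ := b
  obtain ⟨c1, c2⟩ := c; obtain ⟨d1, d2⟩ := d
  simp only [lineES, uab, vab, perp, edist2, Set.mem_inter_iff, Set.mem_setOf_eq,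
    Prod.mk_add_mk, Prod.smul_mk, Prod.mk.injEq, smul_eq_mul, Prod.mk_sub_mk] at *
  constructor
  · rintro (⟨q, ⟨t, rfl⟩, s, hq⟩ | ⟨h1, h2⟩)
    · simp only [Prod.mk.injEq] at hq
      obtain ⟨⟨h1, h2⟩, hts⟩ := hq
      subst hts
      congr 1
      linear_combination (2*((a1-b1)-(c1-d1)))*h1 + (2*((a2-b2)-(c2-d2)))*h2
    · have e1 : a1 - c1 = b1 - d1 := by linarith
      have e2 : a2 - c2 = b2 - d2 := by linarith
      rw [e1, e2]
  · intro h
    have hsq : (a1 - c1) ^ 2 + (a2 - c2) ^ 2 = (b1 - d1) ^ 2 + (b2 - d2) ^ 2 := by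
      have e1 := Real.sq_sqrt (show (0:ℝ) ≤ (a1 - c1) ^ 2 + (a2 - c2) ^ 2 by positivity)
      have e2 := Real.sq_sqrt (show (0:ℝ) ≤ (b1 - d1) ^ 2 + (b2 - d2) ^ 2 by positivity)
      rw [← e1, ← e2, h]
    by_cases hv : (a1 - b1 = c1 - d1) ∧ (a2 - b2 = c2 - d2)
    · right
      exact ⟨by rw [hv.2], by rw [hv.1]⟩
    · left
      have hcross : (1/2 * (a1 + b1) - 1/2 * (c1 + d1)) * (1/2 * (c1 - d1) - 1/2 * (a1 - b1))
          - (1/2 * (a2 + b2) - 1/2 * (c2 + d2)) * (1/2 * (-(c2 - d2)) - 1/2 * (-(a2 - b2))) = 0 := by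
        linear_combination (-1/4 : ℝ) * hsq
      by_cases hw : (1/2 * (-(c2 - d2)) - 1/2 * (-(a2 - b2)) : ℝ) ≠ 0
      · obtain ⟨t, ht⟩ : ∃ t : ℝ, t = (1/2 * (a1 + b1) - 1/2 * (c1 + d1)) /
          (1/2 * (-(c2 - d2)) - 1/2 * (-(a2 - b2))) := ⟨_, rfl⟩
        have key1 : t * (1/2 * (-(c2 - d2)) - 1/2 * (-(a2 - b2)))
            = 1/2 * (a1 + b1) - 1/2 * (c1 + d1) := by
          rw [ht]; exact div_mul_cancel₀ _ hw
        have key2 : t * (1/2 * (a1 - b1) - 1/2 * (c1 - d1))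
            = 1/2 * (c2 + d2) - 1/2 * (a2 + b2) := by
          rw [ht, div_mul_eq_mul_div, div_eq_iff hw]
          linear_combination (-1 : ℝ) * hcross
        refine ⟨_, ⟨t, rfl⟩, t, ?_⟩
        simp only [Prod.mk.injEq]
        refine ⟨⟨?_, ?_⟩, trivial⟩
        · linear_combination (-1 : ℝ) * key1
        · linear_combination key2
      · push_neg at hw
        have h2 : a2 - b2 = c2 - d2 := by linarith
        have hw2 : (1/2 * (c1 - d1) - 1/2 * (a1 - b1) : ℝ) ≠ 0 := by
          intro hz
          exact hv ⟨by linarith, h2⟩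
        obtain ⟨t, ht⟩ : ∃ t : ℝ, t = (1/2 * (a2 + b2) - 1/2 * (c2 + d2)) /
          (1/2 * (c1 - d1) - 1/2 * (a1 - b1)) := ⟨_, rfl⟩
        have key2 : t * (1/2 * (c1 - d1) - 1/2 * (a1 - b1))
            = 1/2 * (a2 + b2) - 1/2 * (c2 + d2) := by
          rw [ht]; exact div_mul_cancel₀ _ hw2
        have hNw : (1/2 * (a1 + b1) - 1/2 * (c1 + d1)) *
            (1/2 * (c1 - d1) - 1/2 * (a1 - b1)) = 0 := by
          linear_combination hcross + (1/2 * (a2 + b2) - 1/2 * (c2 + d2)) * hw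
        have hN := (mul_eq_zero.mp hNw).resolve_right hw2
        refine ⟨_, ⟨t, rfl⟩, t, ?_⟩
        simp only [Prod.mk.injEq]
        refine ⟨⟨?_, ?_⟩, trivial⟩
        · linear_combination hN - t * hw
        · linear_combination (-1 : ℝ) * key2
end

section
/- For points a, b, c ∈ ℝ² with b ≠ c, the lines ℓ_{a,b} and ℓ_{a,c} in ℝ³ neither intersect nor are parallel. -/
/-- For points `a, b, c ∈ ℝ²` with `b ≠ c`, the lines `ℓ_{a,b}` and
`ℓ_{a,c}` in `ℝ³` neither intersect nor are parallel. -/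
theorem stmt15 (a b c : ℝ × ℝ) (hbc : b ≠ c) :
    ¬ ((∃ q, q ∈ lineES a b ∩ lineES a c) ∨ vab a b = vab a c) := by
  rintro (⟨q, ⟨t, ht⟩, ⟨s, hs⟩⟩ | h)
  · rw [ht] at hs
    have hts : t = s := congrArg Prod.snd hs
    subst hts
    have h1 : (uab a b + t • vab a b).1 = (uab a c + t • vab a c).1 :=
      congrArg (fun p => p.1.1) hs
    have h2 : (uab a b + t • vab a b).2 = (uab a c + t • vab a c).2 :=
      congrArg (fun p => p.1.2) hs
    simp only [uab, vab, perp, Prod.fst_add, Prod.snd_add, Prod.smul_fst,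
      Prod.smul_snd, smul_eq_mul, Prod.fst_sub, Prod.snd_sub] at h1 h2
    have e1 : b.1 - c.1 + t * (b.2 - c.2) = 0 := by linarith
    have e2 : b.2 - c.2 - t * (b.1 - c.1) = 0 := by linarith
    have h3 : (b.1 - c.1) * (1 + t ^ 2) = 0 := by linear_combination e1 - t * e2
    have h4 : (b.2 - c.2) * (1 + t ^ 2) = 0 := by linear_combination e2 + t * e1
    have hpos : (1 + t ^ 2) ≠ 0 := by positivity
    have hb1 : b.1 = c.1 := by
      have := (mul_eq_zero.mp h3).resolve_right hpos; linarith
    have hb2 : b.2 = c.2 := by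
      have := (mul_eq_zero.mp h4).resolve_right hpos; linarith
    exact hbc (Prod.ext hb1 hb2)
  · apply hbc
    simp only [vab, perp] at h
    have h1 : b.2 = c.2 := by
      have := congrArg (fun p : ℝ × ℝ => p.1) h
      simp at this; linarith
    have h2 : b.1 = c.1 := by
      have := congrArg (fun p : ℝ × ℝ => p.2) h
      simp at this; linarith
    exact Prod.ext h2 h1
end

section
/- Let a₁,…,a_r and b₁,…,b_r (r ≥ 3) be points in ℝ² such that the lines ℓ_{a_i,b_i} in ℝ³ are all concurrent and all coplanar. Then the points a₁,…,a_r are collinear, the points b₁,…,b_r are collinear, and ‖a_i − a_j‖ = ‖b_i − b_j‖ for all i, j. -/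
lemma collinear_of_linear {s : Set (ℝ × ℝ)} {c₁ c₂ K : ℝ} (hc : ¬(c₁ = 0 ∧ c₂ = 0))
    (h : ∀ p ∈ s, c₁ * p.1 + c₂ * p.2 = K) : Collinear ℝ s := by
  rcases s.eq_empty_or_nonempty with rfl | ⟨p₀, hp₀⟩
  · exact collinear_empty ℝ _
  · have hN : c₁ ^ 2 + c₂ ^ 2 ≠ 0 := by
      intro hN
      exact hc ⟨by nlinarith [sq_nonneg c₁, sq_nonneg c₂], by nlinarith [sq_nonneg c₁, sq_nonneg c₂]⟩
    rw [collinear_iff_of_mem hp₀]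
    refine ⟨(c₂, -c₁), fun p hp => ?_⟩
    set t : ℝ := (c₂ * (p.1 - p₀.1) - c₁ * (p.2 - p₀.2)) / (c₁ ^ 2 + c₂ ^ 2) with hT
    refine ⟨t, ?_⟩
    have h1 := h p hp
    have h2 := h p₀ hp₀
    have hrel : c₁ * (p.1 - p₀.1) + c₂ * (p.2 - p₀.2) = 0 := by linarith
    have e1 : p.1 = t * c₂ + p₀.1 := by
      rw [hT]; field_simp; linear_combination c₁ * hrel
    have e2 : p.2 = t * (-c₁) + p₀.2 := by
      rw [hT]; field_simp; linear_combination c₂ * hrel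
    have : t • ((c₂, -c₁) : ℝ × ℝ) +ᵥ p₀ = (t * c₂ + p₀.1, t * (-c₁) + p₀.2) := rfl
    rw [this, Prod.ext_iff]
    exact ⟨e1, e2⟩

/-- If the lines `ℓ_{aᵢ,bᵢ}` (for `r ≥ 3` pairs of points of `ℝ²`) are all
concurrent and all coplanar (lie in a single affine plane
`{q : α q.1.1 + β q.1.2 + γ q.2 = δ}` of `ℝ³`), then the points `a₁,…,aᵣ`
are collinear, the points `b₁,…,bᵣ` are collinear, and
`‖aᵢ − aⱼ‖ = ‖bᵢ − bⱼ‖` for all `i, j`. -/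
theorem stmt18 (r : ℕ) (hr : 3 ≤ r) (a b : Fin r → ℝ × ℝ)
    (hcon : ∃ q, ∀ i, q ∈ lineES (a i) (b i))
    (hcop : ∃ α β γ δ : ℝ, (α, β, γ) ≠ ((0 : ℝ), (0 : ℝ), (0 : ℝ)) ∧
      ∀ i, ∀ q ∈ lineES (a i) (b i), α * q.1.1 + β * q.1.2 + γ * q.2 = δ) :
    Collinear ℝ (Set.range a) ∧ Collinear ℝ (Set.range b) ∧
      ∀ i j, edist2 (a i) (a j) = edist2 (b i) (b j) := by
  obtain ⟨q, hq⟩ := hcon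
  obtain ⟨α, β, γ, δ, hne, hpl⟩ := hcop
  -- concurrency equations
  have E12 : ∀ i, (a i).1 + (b i).1 - q.2 * ((a i).2 - (b i).2) = 2 * q.1.1 ∧
      (a i).2 + (b i).2 + q.2 * ((a i).1 - (b i).1) = 2 * q.1.2 := by
    intro i
    obtain ⟨t, ht⟩ := hq i
    have hts : q.2 = t := congrArg Prod.snd ht
    have h1 : q.1 = uab (a i) (b i) + t • vab (a i) (b i) := congrArg Prod.fst ht
    rw [← hts] at h1
    have hf := congrArg Prod.fst h1
    have hs := congrArg Prod.snd h1
    simp [uab, vab, perp] at hf hs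
    constructor <;> [linarith [hf]; linarith [hs]]
  have E1 := fun i => (E12 i).1
  have E2 := fun i => (E12 i).2
  -- plane equation, direction part
  have P2 : ∀ i, -α * ((a i).2 - (b i).2) + β * ((a i).1 - (b i).1) = -2 * γ := by
    intro i
    have h0 := hpl i (uab (a i) (b i) + (0:ℝ) • vab (a i) (b i), 0) ⟨0, rfl⟩
    have h1 := hpl i (uab (a i) (b i) + (1:ℝ) • vab (a i) (b i), 1) ⟨1, rfl⟩
    simp [uab, vab, perp] at h0 h1
    linarith
  -- α, β not both zero
  have hαβ : ¬(α = 0 ∧ β = 0) := by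
    rintro ⟨rfl, rfl⟩
    have hγ : γ ≠ 0 := fun hγ => hne (by simp [hγ])
    have := P2 ⟨0, by omega⟩
    simp at this
    exact hγ (by linarith)
  have hpos : (0:ℝ) < 1 + q.2 ^ 2 := by positivity
  -- collinearity of a
  have hA : Collinear ℝ (Set.range a) := by
    apply collinear_of_linear (c₁ := β - α * q.2) (c₂ := -(α + β * q.2))
      (K := (β - α * q.2) * q.1.1 - (α + β * q.2) * q.1.2 - γ * (1 + q.2 ^ 2))
    · rintro ⟨h1, h2⟩
      apply hαβ
      have hα : α * (1 + q.2 ^ 2) = 0 := by linear_combination (-1) * h2 - q.2 * h1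
      have hα0 : α = 0 := (mul_eq_zero.mp hα).resolve_right (ne_of_gt hpos)
      exact ⟨hα0, by linear_combination h1 + q.2 * hα0⟩
    · rintro p ⟨i, rfl⟩
      have e1 := E1 i; have e2 := E2 i; have p2 := P2 i
      linear_combination ((β - α * q.2) / 2) * e1 - ((α + β * q.2) / 2) * e2 +
        ((1 + q.2 ^ 2) / 2) * p2
  have hB : Collinear ℝ (Set.range b) := by
    apply collinear_of_linear (c₁ := β + α * q.2) (c₂ := β * q.2 - α)
      (K := (β + α * q.2) * q.1.1 + (β * q.2 - α) * q.1.2 + γ * (1 + q.2 ^ 2))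
    · rintro ⟨h1, h2⟩
      apply hαβ
      have hα : α * (1 + q.2 ^ 2) = 0 := by linear_combination q.2 * h1 - h2
      have hα0 : α = 0 := (mul_eq_zero.mp hα).resolve_right (ne_of_gt hpos)
      exact ⟨hα0, by linear_combination h1 - q.2 * hα0⟩
    · rintro p ⟨i, rfl⟩
      have e1 := E1 i; have e2 := E2 i; have p2 := P2 i
      linear_combination ((β + α * q.2) / 2) * e1 + ((β * q.2 - α) / 2) * e2 -
        ((1 + q.2 ^ 2) / 2) * p2
  refine ⟨hA, hB, fun i j => ?_⟩
  unfold edist2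
  congr 1
  have e1i := E1 i; have e1j := E1 j; have e2i := E2 i; have e2j := E2 j
  linear_combination ((a i).1 - (a j).1 - (b i).1 + (b j).1) * e1i -
    ((a i).1 - (a j).1 - (b i).1 + (b j).1) * e1j +
    ((a i).2 - (a j).2 - (b i).2 + (b j).2) * e2i -
    ((a i).2 - (a j).2 - (b i).2 + (b j).2) * e2j
end

section
/- Let G = (V,E) be a graph on n vertices, let p, p' : V → ℝ² be maps with ‖p(u) − p(v)‖ = ‖p'(u) − p'(v)‖ for every edge {u,v} ∈ E, and suppose the lines ℓ_{p(v), p'(v)} ⊂ ℝ³, v ∈ V, are pairwise distinct. Then the intersection graph of the line sequence (ℓ_{p(v),p'(v)})_{v∈V} contains G, i.e., for every edge {u,v} of G, the lines ℓ_{p(u),p'(u)} and ℓ_{p(v),p'(v)} intersect or are parallel. -/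
/-- Let `G` be a graph on a vertex set `V` and `p, p' : V → ℝ²` maps with
`‖p(u) − p(v)‖ = ‖p'(u) − p'(v)‖` for every edge `uv` of `G`, such that the
lines `ℓ_{p(v),p'(v)}`, `v ∈ V`, are pairwise distinct.  Then for every edge
`uv` of `G`, the lines `ℓ_{p(u),p'(u)}` and `ℓ_{p(v),p'(v)}` intersect or
are parallel; i.e. the intersection graph of the line sequence contains `G`. -/
theorem stmt19 {V : Type*} (G : SimpleGraph V) (p p' : V → ℝ × ℝ)
    (hdist : ∀ u v : V, G.Adj u v →
      edist2 (p u) (p v) = edist2 (p' u) (p' v))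
    (hdistinct : ∀ u v : V, u ≠ v →
      lineES (p u) (p' u) ≠ lineES (p v) (p' v)) :
    ∀ u v : V, G.Adj u v →
      ((∃ q, q ∈ lineES (p u) (p' u) ∩ lineES (p v) (p' v)) ∨
        vab (p u) (p' u) = vab (p v) (p' v)) := by

  intro u v huv
  set a := p u with ha
  set b := p' u with hb
  set c := p v with hc
  set d := p' v with hd0
  by_cases h : a - b = c - d
  · right
    simp only [vab, h]
  · left
    have hd : (a.1 - c.1)^2 + (a.2 - c.2)^2 = (b.1 - d.1)^2 + (b.2 - d.2)^2 := by
      have hE := hdist u v huv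
      rw [← ha, ← hb, ← hc, ← hd0] at hE
      have h1 : (0:ℝ) ≤ (a.1 - c.1)^2 + (a.2 - c.2)^2 := by positivity
      have h2 : (0:ℝ) ≤ (b.1 - d.1)^2 + (b.2 - d.2)^2 := by positivity
      have := congrArg (·^2) hE
      simpa [edist2, Real.sq_sqrt h1, Real.sq_sqrt h2] using this
    set q1 := a.1 - b.1 - c.1 + d.1 with hq1
    set q2 := a.2 - b.2 - c.2 + d.2 with hq2
    have hden : q1^2 + q2^2 ≠ 0 := by
      intro h0
      apply h
      have hq10 : q1 = 0 := by nlinarith [sq_nonneg q1, sq_nonneg q2]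
      have hq20 : q2 = 0 := by nlinarith [sq_nonneg q1, sq_nonneg q2]
      have e1 : a.1 - b.1 = c.1 - d.1 := by rw [hq1] at hq10; linarith
      have e2 : a.2 - b.2 = c.2 - d.2 := by rw [hq2] at hq20; linarith
      ext <;> simp [e1, e2]
    set t := ((a.1+b.1-c.1-d.1)*q2 - (a.2+b.2-c.2-d.2)*q1) / (q1^2+q2^2) with ht
    refine ⟨(uab a b + t • vab a b, t), ⟨t, rfl⟩, ⟨t, ?_⟩⟩
    have key : uab a b + t • vab a b = uab c d + t • vab c d := by
      apply Prod.ext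
      · show (uab a b).1 + t * (vab a b).1 = (uab c d).1 + t * (vab c d).1
        simp only [uab, vab, perp, Prod.smul_fst, Prod.fst_add, Prod.fst_sub, Prod.snd_sub, smul_eq_mul]
        rw [ht]
        field_simp
        linear_combination q1 * hd
      · show (uab a b).2 + t * (vab a b).2 = (uab c d).2 + t * (vab c d).2
        simp only [uab, vab, perp, Prod.smul_snd, Prod.snd_add, Prod.snd_sub, Prod.fst_sub, smul_eq_mul]
        rw [ht]
        field_simp
        linear_combination q2 * hd
    rw [key]
end
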